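/- (Corollary to Proposition 8.) For every set S of argumentation frameworks over U (i.e., every set of pairs (A',R') with A' ⊆ U and R' ⊆ A'×A') there exists a constrained incomplete AF (A, φ) with completions(A, φ) = S; in fact one can take A = U. -/

import Mathlib

noncomputable section

namespace DLPA

/-- Propositional variables: awareness, acceptance, attack, auxiliary acceptance
copies, plus countably many further auxiliary variables. -/
inductive PVar (U : Type) : Type
  | aw : U → PVar U
  | inn : U → PVar U
  | att : U → U → PVar U
  | inn' : U → PVar U
  | aux : Nat → PVar U

-- DL-PA formulas and programs, by mutual recursion.
mutual
  inductive Form (U : Type) : Type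
    | var : PVar U → Form U
    | neg : Form U → Form U
    | conj : Form U → Form U → Form U
    | box : Prog U → Form U → Form U
  inductive Prog (U : Type) : Type
    | add : PVar U → Prog U           -- +p
    | rem : PVar U → Prog U           -- −p
    | test : Form U → Prog U          -- φ?
    | seq : Prog U → Prog U → Prog U
    | choice : Prog U → Prog U → Prog U
    | conv : Prog U → Prog U
end

variable {U : Type}

/-- A valuation is a set of propositional variables. -/
abbrev Val (U : Type) := Set (PVar U)

-- Satisfaction of formulas and interpretation of programs, by mutual recursion.
mutual
  def Sat : Val U → Form U → Prop
    | v, Form.var p => p ∈ v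
    | v, Form.neg φ => ¬ Sat v φ
    | v, Form.conj φ ψ => Sat v φ ∧ Sat v ψ
    | v, Form.box π φ => ∀ w, Rel π v w → Sat w φ
  def Rel : Prog U → Val U → Val U → Prop
    | Prog.add p, v, w => w = v ∪ {p}
    | Prog.rem p, v, w => w = v \ {p}
    | Prog.test φ, v, w => w = v ∧ Sat v φ
    | Prog.seq π₁ π₂, v, w => ∃ u, Rel π₁ v u ∧ Rel π₂ u w
    | Prog.choice π₁ π₂, v, w => Rel π₁ v w ∨ Rel π₂ v w
    | Prog.conv π, v, w => Rel π w v
end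

def Form.falsum : Form U := Form.conj (Form.var (PVar.aux 0)) (Form.neg (Form.var (PVar.aux 0)))
def Form.top : Form U := Form.neg Form.falsum
def Form.impl (φ ψ : Form U) : Form U := Form.neg (Form.conj φ (Form.neg ψ))
def Form.disj (φ ψ : Form U) : Form U := Form.neg (Form.conj (Form.neg φ) (Form.neg ψ))
def Form.equiv (φ ψ : Form U) : Form U := Form.conj (Form.impl φ ψ) (Form.impl ψ φ)
def Form.dia (π : Prog U) (φ : Form U) : Form U := Form.neg (Form.box π (Form.neg φ))
def Prog.skip : Prog U := Prog.test Form.top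

/-- Sequential composition of a list of programs (`skip` for the empty list). -/
def seqList {β : Type} (f : β → Prog U) : List β → Prog U
  | [] => Prog.skip
  | p :: ps => Prog.seq (f p) (seqList f ps)

/-- Nondeterministic composition of a list of programs (`skip` for the empty list). -/
def unionList {β : Type} (f : β → Prog U) : List β → Prog U
  | [] => Prog.skip
  | [p] => f p
  | p :: ps => Prog.choice (f p) (unionList f ps)

def mkTrueOne (L : List (PVar U)) : Prog U :=
  unionList (fun p => Prog.seq (Prog.test (Form.neg (Form.var p))) (Prog.add p)) L
def mkFalseOne (L : List (PVar U)) : Prog U :=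
  unionList (fun p => Prog.seq (Prog.test (Form.var p)) (Prog.rem p)) L
def mkTrueSome (L : List (PVar U)) : Prog U :=
  seqList (fun p => Prog.choice (Prog.add p) Prog.skip) L
def mkFalseSome (L : List (PVar U)) : Prog U :=
  seqList (fun p => Prog.choice (Prog.rem p) Prog.skip) L
def vary (L : List (PVar U)) : Prog U :=
  seqList (fun p => Prog.choice (Prog.add p) (Prog.rem p)) L
/-- dis(ATT_R): for each pair (x,y) in the list, make true att_{x,y} or att_{y,x}. -/
def dis (L : List (U × U)) : Prog U :=
  seqList (fun q => Prog.choice (Prog.add (PVar.att q.1 q.2)) (Prog.add (PVar.att q.2 q.1))) L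

def conjList : List (Form U) → Form U
  | [] => Form.top
  | φ :: φs => Form.conj φ (conjList φs)
def disjList : List (Form U) → Form U
  | [] => Form.falsum
  | φ :: φs => Form.disj φ (disjList φs)

/-- The elements of a finite universe in a fixed order. -/
def enum (U : Type) [Fintype U] : List U := Finset.univ.toList

def bigConj [Fintype U] (f : U → Form U) : Form U := conjList ((enum U).map f)
def bigDisj [Fintype U] (f : U → Form U) : Form U := disjList ((enum U).map f)

def INlist (U : Type) [Fintype U] : List (PVar U) := (enum U).map PVar.inn

/-- copy(IN_U) copies the value of in_x to in'_x, for every x ∈ U. -/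
def copyIN (U : Type) [Fintype U] : Prog U :=
  seqList (fun x => Prog.choice
      (Prog.seq (Prog.test (Form.var (PVar.inn x))) (Prog.add (PVar.inn' x)))
      (Prog.seq (Prog.test (Form.neg (Form.var (PVar.inn x)))) (Prog.rem (PVar.inn' x))))
    (enum U)

def Well (U : Type) [Fintype U] : Form U :=
  bigConj (fun x => Form.impl (Form.var (PVar.inn x)) (Form.var (PVar.aw x)))

def ConFree (U : Type) [Fintype U] : Form U :=
  Form.conj (Well U) (bigConj fun x => bigConj fun y =>
    Form.neg (Form.conj (Form.var (PVar.inn x))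
      (Form.conj (Form.var (PVar.inn y)) (Form.var (PVar.att x y)))))

def AdmissibleF (U : Type) [Fintype U] : Form U :=
  Form.conj (ConFree U) (bigConj fun x => Form.impl (Form.var (PVar.inn x))
    (bigConj fun y => Form.impl (Form.conj (Form.var (PVar.aw y)) (Form.var (PVar.att y x)))
      (bigDisj fun z => Form.conj (Form.var (PVar.inn z)) (Form.var (PVar.att z y)))))

def StableF (U : Type) [Fintype U] : Form U :=
  Form.conj (Well U) (bigConj fun x => Form.impl (Form.var (PVar.aw x))
    (Form.equiv (Form.var (PVar.inn x))
      (Form.neg (bigDisj fun y => Form.conj (Form.var (PVar.inn y)) (Form.var (PVar.att y x))))))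

def CompleteF (U : Type) [Fintype U] : Form U :=
  Form.conj (ConFree U) (bigConj fun x => Form.equiv (Form.var (PVar.inn x))
    (bigConj fun y => Form.impl (Form.conj (Form.var (PVar.aw y)) (Form.var (PVar.att y x)))
      (bigDisj fun z => Form.conj (Form.var (PVar.inn z)) (Form.var (PVar.att z y)))))

def GroundedF (U : Type) [Fintype U] : Form U :=
  Form.conj (CompleteF U)
    (Form.box (Prog.seq (mkFalseOne (INlist U)) (mkFalseSome (INlist U))) (Form.neg (CompleteF U)))

def PreferredF (U : Type) [Fintype U] : Form U :=
  Form.conj (AdmissibleF U)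
    (Form.box (Prog.seq (mkTrueOne (INlist U)) (mkTrueSome (INlist U))) (Form.neg (AdmissibleF U)))

def NaiveF (U : Type) [Fintype U] : Form U :=
  Form.conj (ConFree U) (Form.box (mkTrueOne (INlist U)) (Form.neg (ConFree U)))

def IncludedInCp (U : Type) [Fintype U] : Form U :=
  bigConj fun x => Form.impl
    (Form.disj (Form.var (PVar.inn x)) (Form.conj (Form.var (PVar.aw x))
      (bigDisj fun y => Form.conj (Form.var (PVar.inn y)) (Form.var (PVar.att y x)))))
    (Form.disj (Form.var (PVar.inn' x)) (Form.conj (Form.var (PVar.aw x))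
      (bigDisj fun y => Form.conj (Form.var (PVar.inn' y)) (Form.var (PVar.att y x)))))

def IncludesCp (U : Type) [Fintype U] : Form U :=
  bigConj fun x => Form.impl
    (Form.disj (Form.var (PVar.inn' x)) (Form.conj (Form.var (PVar.aw x))
      (bigDisj fun y => Form.conj (Form.var (PVar.inn' y)) (Form.var (PVar.att y x)))))
    (Form.disj (Form.var (PVar.inn x)) (Form.conj (Form.var (PVar.aw x))
      (bigDisj fun y => Form.conj (Form.var (PVar.inn y)) (Form.var (PVar.att y x)))))

/-- makeExt^σ = vary(IN_U); φ_σ? -/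
def makeExt (U : Type) [Fintype U] (φ : Form U) : Prog U :=
  Prog.seq (vary (INlist U)) (Prog.test φ)

def SemiStableF (U : Type) [Fintype U] : Form U :=
  Form.conj (CompleteF U)
    (Form.box (Prog.seq (copyIN U) (makeExt U (CompleteF U)))
      (Form.impl (IncludesCp U) (IncludedInCp U)))

/-- A_v -/
def Av (v : Val U) : Set U := {x | PVar.aw x ∈ v}
/-- R_v -/
def Rv (v : Val U) : Set (U × U) := {q | q.1 ∈ Av v ∧ q.2 ∈ Av v ∧ PVar.att q.1 q.2 ∈ v}
/-- E(v) -/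
def Ev (v : Val U) : Set U := {x | PVar.inn x ∈ v}
/-- {x ∈ U : in'_x ∈ v} -/
def Cv (v : Val U) : Set U := {x | PVar.inn' x ∈ v}
/-- v_(A,R) = AW_A ∪ ATT_R -/
def valOf (A : Set U) (R : Set (U × U)) : Val U :=
  (PVar.aw '' A) ∪ ((fun q : U × U => PVar.att q.1 q.2) '' R)

/-- E⁺, the set of arguments of A attacked by E in (A,R). -/
def attacked (A : Set U) (R : Set (U × U)) (E : Set U) : Set U :=
  {x ∈ A | ∃ y ∈ E, (y, x) ∈ R}
/-- E⊕ = E ∪ E⁺, the range of E. -/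
def rangeOf (A : Set U) (R : Set (U × U)) (E : Set U) : Set U :=
  E ∪ attacked A R E

def IsConflictFree (A : Set U) (R : Set (U × U)) (E : Set U) : Prop :=
  E ⊆ A ∧ E ∩ attacked A R E = ∅
def Defends (A : Set U) (R : Set (U × U)) (E : Set U) (a : U) : Prop :=
  ∀ x ∈ A, (x, a) ∈ R → x ∈ attacked A R E
def IsAdmissibleExt (A : Set U) (R : Set (U × U)) (E : Set U) : Prop :=
  IsConflictFree A R E ∧ ∀ a ∈ E, Defends A R E a
def IsStableExt (A : Set U) (R : Set (U × U)) (E : Set U) : Prop :=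
  IsConflictFree A R E ∧ A \ E ⊆ attacked A R E
def IsCompleteExt (A : Set U) (R : Set (U × U)) (E : Set U) : Prop :=
  IsConflictFree A R E ∧ E = {a ∈ A | Defends A R E a}
def IsGroundedExt (A : Set U) (R : Set (U × U)) (E : Set U) : Prop :=
  IsCompleteExt A R E ∧ ∀ E', IsCompleteExt A R E' → E' ⊆ E → E' = E
def IsPreferredExt (A : Set U) (R : Set (U × U)) (E : Set U) : Prop :=
  IsCompleteExt A R E ∧ ∀ E', IsCompleteExt A R E' → E ⊆ E' → E' = E
def IsNaiveExt (A : Set U) (R : Set (U × U)) (E : Set U) : Prop :=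
  IsConflictFree A R E ∧ ∀ E', IsConflictFree A R E' → E ⊆ E' → E' = E
def IsSemiStableExt (A : Set U) (R : Set (U × U)) (E : Set U) : Prop :=
  IsCompleteExt A R E ∧ ¬ ∃ E', IsCompleteExt A R E' ∧ rangeOf A R E ⊂ rangeOf A R E'

end DLPA

end

noncomputable section
open DLPA

/-- φ is a program-free (Boolean) formula using only variables from S. -/
def UsesOnly {U : Type} (S : Set (PVar U)) : Form U → Prop
  | Form.var p => p ∈ S
  | Form.neg φ => UsesOnly S φ
  | Form.conj φ ψ => UsesOnly S φ ∧ UsesOnly S ψ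
  | Form.box _ _ => False

/-- AW_A ∪ ATT_{A×A}, the vocabulary of a constrained incomplete AF with domain A. -/
def cVocab {U : Type} (A : Set U) : Set (PVar U) :=
  (PVar.aw '' A) ∪ ((fun q : U × U => PVar.att q.1 q.2) '' (A ×ˢ A))

/-- AW_A ∪ IN_A ∪ ATT_{A×A}. -/
def cVocabFull {U : Type} (A : Set U) : Set (PVar U) :=
  cVocab A ∪ (PVar.inn '' A)

/-- (A*, R*) belongs to completions(A, φ). -/
def IsCCompletion {U : Type} (A : Set U) (φ : Form U)
    (As : Set U) (Rs : Set (U × U)) : Prop :=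
  ∃ v : Val U, v ⊆ cVocabFull A ∧ Sat v φ ∧ Av v = As ∧ Rv v = Rs

end

noncomputable section Aux
open DLPA Classical

variable {U : Type}

/-- A top formula using only the variable `aw x0`. -/
def myTop (x0 : U) : Form U :=
  Form.disj (Form.var (PVar.aw x0)) (Form.neg (Form.var (PVar.aw x0)))

def myConjList (x0 : U) : List (Form U) → Form U
  | [] => myTop x0
  | φ :: L => Form.conj φ (myConjList x0 L)

def myDisjList (x0 : U) : List (Form U) → Form U
  | [] => Form.neg (myTop x0)
  | φ :: L => Form.disj φ (myDisjList x0 L)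

/-- Literal: `p` if `b`, else `¬p`. -/
def lit (p : PVar U) (b : Prop) : Form U :=
  if b then Form.var p else Form.neg (Form.var p)

lemma sat_disj (v : Val U) (a b : Form U) :
    Sat v (Form.disj a b) ↔ Sat v a ∨ Sat v b := by
  simp only [Form.disj, Sat]; tauto

lemma sat_myTop (v : Val U) (x0 : U) : Sat v (myTop x0) := by
  rw [myTop, sat_disj]; simp [Sat]; tauto

lemma sat_myConjList (v : Val U) (x0 : U) :
    ∀ L : List (Form U), Sat v (myConjList x0 L) ↔ ∀ φ ∈ L, Sat v φ
  | [] => by simp [myConjList, sat_myTop]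
  | φ :: L => by
      simp only [myConjList, Sat, List.mem_cons, sat_myConjList v x0 L]
      constructor
      · rintro ⟨h1, h2⟩ ψ (rfl | hψ); exact h1; exact h2 _ hψ
      · intro h; exact ⟨h _ (Or.inl rfl), fun ψ hψ => h _ (Or.inr hψ)⟩

lemma sat_myDisjList (v : Val U) (x0 : U) :
    ∀ L : List (Form U), Sat v (myDisjList x0 L) ↔ ∃ φ ∈ L, Sat v φ
  | [] => by simp [myDisjList, Sat, sat_myTop]
  | φ :: L => by
      simp only [myDisjList, sat_disj, List.mem_cons, sat_myDisjList v x0 L]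
      constructor
      · rintro (h | ⟨ψ, hψ, h⟩); exacts [⟨φ, Or.inl rfl, h⟩, ⟨ψ, Or.inr hψ, h⟩]
      · rintro ⟨ψ, (rfl | hψ), h⟩; exacts [Or.inl h, Or.inr ⟨ψ, hψ, h⟩]

lemma sat_lit (v : Val U) (p : PVar U) (b : Prop) :
    Sat v (lit p b) ↔ (p ∈ v ↔ b) := by
  by_cases hb : b <;> simp [lit, hb, Sat]

lemma usesOnly_myTop (S : Set (PVar U)) (x0 : U) (h : PVar.aw x0 ∈ S) :
    UsesOnly S (myTop x0) := by
  simp [myTop, Form.disj, UsesOnly, h]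

lemma usesOnly_myConjList (S : Set (PVar U)) (x0 : U) (h : PVar.aw x0 ∈ S) :
    ∀ L : List (Form U), (∀ φ ∈ L, UsesOnly S φ) → UsesOnly S (myConjList x0 L)
  | [], _ => usesOnly_myTop S x0 h
  | φ :: L, hL => by
      refine ⟨hL _ List.mem_cons_self, ?_⟩
      exact usesOnly_myConjList S x0 h L (fun ψ hψ => hL _ (List.mem_cons_of_mem _ hψ))

lemma usesOnly_myDisjList (S : Set (PVar U)) (x0 : U) (h : PVar.aw x0 ∈ S) :
    ∀ L : List (Form U), (∀ φ ∈ L, UsesOnly S φ) → UsesOnly S (myDisjList x0 L)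
  | [], _ => usesOnly_myTop S x0 h
  | φ :: L, hL =>
      (⟨hL _ List.mem_cons_self,
        usesOnly_myDisjList S x0 h L (fun ψ hψ => hL _ (List.mem_cons_of_mem _ hψ))⟩ :
        UsesOnly S φ ∧ UsesOnly S (myDisjList x0 L))

lemma usesOnly_lit (S : Set (PVar U)) (p : PVar U) (b : Prop) (h : p ∈ S) :
    UsesOnly S (lit p b) := by
  by_cases hb : b <;> simp [lit, hb, UsesOnly, h]

/-- Exact description of the AF `P`. -/
def descr [Fintype U] (x0 : U) (P : Set U × Set (U × U)) : Form U :=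
  Form.conj
    (myConjList x0 ((enum U).map fun x => lit (PVar.aw x) (x ∈ P.1)))
    (myConjList x0 ((enum U).map fun x =>
      myConjList x0 ((enum U).map fun y => lit (PVar.att x y) ((x, y) ∈ P.2))))

lemma mem_enum [Fintype U] (x : U) : x ∈ enum U := by
  simp [enum, Finset.mem_toList]

lemma sat_descr [Fintype U] (v : Val U) (x0 : U) (P : Set U × Set (U × U)) :
    Sat v (descr x0 P) ↔
      (∀ x, PVar.aw x ∈ v ↔ x ∈ P.1) ∧ ∀ x y, PVar.att x y ∈ v ↔ (x, y) ∈ P.2 := by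
  have key : ∀ f : U → Form U,
      Sat v (myConjList x0 ((enum U).map f)) ↔ ∀ x, Sat v (f x) := by
    intro f
    rw [sat_myConjList]
    constructor
    · intro h x; exact h _ (List.mem_map_of_mem (f := f) (mem_enum x))
    · intro h φ hφ; obtain ⟨x, -, rfl⟩ := List.mem_map.mp hφ; exact h x
  simp only [descr, Sat, key, sat_lit]

lemma usesOnly_descr [Fintype U] (x0 : U) (P : Set U × Set (U × U)) :
    UsesOnly (cVocab (Set.univ : Set U)) (descr x0 P) := by
  have haw : ∀ x : U, PVar.aw x ∈ cVocab (Set.univ : Set U) := fun x =>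
    Or.inl ⟨x, Set.mem_univ x, rfl⟩
  have hatt : ∀ x y : U, PVar.att x y ∈ cVocab (Set.univ : Set U) := fun x y =>
    Or.inr ⟨(x, y), by simp, rfl⟩
  refine ⟨?_, ?_⟩
  · apply usesOnly_myConjList _ _ (haw x0)
    rintro φ hφ
    rw [List.mem_map] at hφ
    obtain ⟨x, -, rfl⟩ := hφ
    exact usesOnly_lit _ _ _ (haw x)
  · apply usesOnly_myConjList _ _ (haw x0)
    rintro φ hφ
    rw [List.mem_map] at hφ
    obtain ⟨x, -, rfl⟩ := hφ
    apply usesOnly_myConjList _ _ (haw x0)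
    rintro ψ hψ
    rw [List.mem_map] at hψ
    obtain ⟨y, -, rfl⟩ := hψ
    exact usesOnly_lit _ _ _ (hatt x y)

end Aux
open DLPA in
/-- Corollary to Proposition 8: cIAFs can express any set of AFs over U (taking A = U). -/
theorem ciaf_maximally_expressive
    (U : Type) [Fintype U] [Nonempty U]
    (S : Set (Set U × Set (U × U))) (hS : ∀ p ∈ S, p.2 ⊆ p.1 ×ˢ p.1) :
    ∃ φ : Form U, UsesOnly (cVocab (Set.univ : Set U)) φ ∧
      ∀ (As : Set U) (Rs : Set (U × U)),
        IsCCompletion (Set.univ : Set U) φ As Rs ↔ (As, Rs) ∈ S := by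
  classical
  obtain ⟨x0⟩ := ‹Nonempty U›
  have hfin : S.Finite := Set.toFinite S
  refine ⟨myDisjList x0 (hfin.toFinset.toList.map (descr x0)), ?_, ?_⟩
  · apply usesOnly_myDisjList _ _ (Or.inl ⟨x0, Set.mem_univ x0, rfl⟩)
    rintro φ hφ
    obtain ⟨P, -, rfl⟩ := List.mem_map.mp hφ
    exact usesOnly_descr x0 P
  · intro As Rs
    constructor
    · rintro ⟨v, -, hsat, hA, hR⟩
      rw [sat_myDisjList] at hsat
      obtain ⟨φ, hφ, hsatφ⟩ := hsat
      obtain ⟨P, hP, rfl⟩ := List.mem_map.mp hφ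
      rw [Finset.mem_toList, Set.Finite.mem_toFinset] at hP
      rw [sat_descr] at hsatφ
      obtain ⟨h1, h2⟩ := hsatφ
      have hA' : Av v = P.1 := Set.ext fun x => h1 x
      have hR' : Rv v = P.2 := by
        ext ⟨x, y⟩
        simp only [Rv, Av, Set.mem_setOf_eq]
        constructor
        · rintro ⟨-, -, h⟩; exact (h2 x y).mp h
        · intro h
          have hxy := hS P hP h
          exact ⟨(h1 x).mpr hxy.1, (h1 y).mpr hxy.2, (h2 x y).mpr h⟩
      have hPeq : (As, Rs) = P := by rw [← hA, ← hR, hA', hR']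
      rw [hPeq]; exact hP
    · intro hmem
      have hawv : ∀ x, PVar.aw x ∈ valOf As Rs ↔ x ∈ As := by
        intro x
        constructor
        · rintro (⟨y, hy, hyx⟩ | ⟨q, -, hq⟩)
          · cases hyx; exact hy
          · cases hq
        · intro hx; exact Or.inl ⟨x, hx, rfl⟩
      have hattv : ∀ x y, PVar.att x y ∈ valOf As Rs ↔ (x, y) ∈ Rs := by
        intro x y
        constructor
        · rintro (⟨z, -, hz⟩ | ⟨⟨a, b⟩, hq, heq⟩)
          · cases hz
          · cases heq; exact hq
        · intro hx; exact Or.inr ⟨(x, y), hx, rfl⟩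
      refine ⟨valOf As Rs, ?_, ?_, ?_, ?_⟩
      · rintro p (⟨x, -, rfl⟩ | ⟨q, -, rfl⟩)
        · exact Or.inl (Or.inl ⟨x, trivial, rfl⟩)
        · exact Or.inl (Or.inr ⟨q, by simp, rfl⟩)
      · rw [sat_myDisjList]
        refine ⟨descr x0 (As, Rs), List.mem_map_of_mem ?_, (sat_descr _ _ _).mpr ⟨hawv, hattv⟩⟩
        rw [Finset.mem_toList, Set.Finite.mem_toFinset]
        exact hmem
      · exact Set.ext fun x => hawv x
      · ext ⟨x, y⟩
        simp only [Rv, Av, Set.mem_setOf_eq, hawv, hattv]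
        constructor
        · rintro ⟨-, -, h⟩; exact h
        · intro h
          have hxy := hS (As, Rs) hmem h
          exact ⟨hxy.1, hxy.2, h⟩
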